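/- (Linearization of the nonlinear Fourier transform: b is the Fourier transform to third order.) Let x ∈ ℝ, let f : [0,∞) → ℂ be locally integrable, and let a, b : [0,∞) → ℂ be differentiable functions satisfying a'(t) = e^{2ixt} conj(f(t)) conj(b(t)), b'(t) = e^{2ixt} conj(f(t)) conj(a(t)), with a(0) = 1 and b(0) = 0. Then for every t ≥ 0, writing F(t) := ∫_0^t |f(s)| ds, one has | b(t) − ∫_0^t e^{2ixs} conj(f(s)) ds | ≤ sinh(F(t)) − F(t); in particular, if F(t) ≤ 1 then the left-hand side is at most F(t)³. -/

import Mathlib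

open MeasureTheory Complex


lemma NFT_aux_monotone_stieltjes_eq {g : ℝ → ℝ} (hg : Monotone g) (hc : Continuous g) (x : ℝ) :
    hg.stieltjesFunction x = g x := by
  rw [hg.stieltjesFunction_eq]
  exact rightLim_eq_of_tendsto (h := nhdsGT_neBot x)
    ((hc.tendsto x).mono_left nhdsWithin_le_nhds)

lemma NFT_ae_hasDerivAt_primitive {φ : ℝ → ℝ} (hm : Measurable φ) (h0 : ∀ s, 0 ≤ φ s)
    (hi : Integrable φ) :
    ∀ᵐ s, HasDerivAt (fun u => ∫ v in (0:ℝ)..u, φ v) (φ s) s := by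
  set G : ℝ → ℝ := fun u => ∫ v in (0:ℝ)..u, φ v with hGdef
  have hII : ∀ a b : ℝ, IntervalIntegrable φ volume a b := fun a b => hi.intervalIntegrable
  have hsub : ∀ u v : ℝ, G v - G u = ∫ s in u..v, φ s := by
    intro u v
    rw [hGdef]
    rw [← intervalIntegral.integral_interval_sub_left (hII 0 v) (hII 0 u)]
  have hGmono : Monotone G := by
    intro u v huv
    have h1 : (0:ℝ) ≤ ∫ s in u..v, φ s := intervalIntegral.integral_nonneg huv fun s _ => h0 s
    have := hsub u v
    linarith
  have hGcont : Continuous G := intervalIntegral.continuous_primitive hII 0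
  have key : hGmono.stieltjesFunction.measure
      = volume.withDensity (fun s => ENNReal.ofReal (φ s)) := by
    refine MeasureTheory.Measure.ext_of_Ioc _ _ (fun a b hab => ?_)
    rw [StieltjesFunction.measure_Ioc, NFT_aux_monotone_stieltjes_eq hGmono hGcont,
      NFT_aux_monotone_stieltjes_eq hGmono hGcont,
      withDensity_apply _ measurableSet_Ioc]
    rw [← MeasureTheory.ofReal_integral_eq_lintegral_ofReal hi.integrableOn
      (Filter.Eventually.of_forall fun s => h0 s)]
    congr 1
    have h3 : (∫ x in Set.Ioc a b, φ x) = G b - G a := by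
      rw [hsub a b, intervalIntegral.integral_of_le hab.le]
    linarith [h3]
  have hder := hGmono.ae_hasDerivAt
  rw [key] at hder
  have h2 := Measure.rnDeriv_withDensity volume (hm.ennreal_ofReal)
  filter_upwards [hder, h2] with s hs h2s
  rwa [h2s, ENNReal.toReal_ofReal (h0 s)] at hs

lemma NFT_key_integral_le {φ ψ h : ℝ → ℝ} (hm : Measurable φ) (h0 : ∀ s, 0 ≤ φ s)
    (hsupp : ∀ s, s ≤ 0 → φ s = 0) (hi : Integrable φ)
    (hψc : Continuous ψ) (hψ0 : ∀ y, 0 ≤ y → 0 ≤ ψ y)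
    (hh : ∀ y, HasDerivAt h (ψ y) y) {t : ℝ} (ht : 0 ≤ t) :
    ∫ s in (0:ℝ)..t, φ s * ψ (∫ v in (0:ℝ)..s, φ v) ≤
      h (∫ v in (0:ℝ)..t, φ v) - h 0 := by
  set G : ℝ → ℝ := fun u => ∫ v in (0:ℝ)..u, φ v with hGdef
  have hII : ∀ a b : ℝ, IntervalIntegrable φ volume a b := fun a b => hi.intervalIntegrable
  have hsub : ∀ u v : ℝ, G v - G u = ∫ s in u..v, φ s := by
    intro u v
    rw [hGdef, ← intervalIntegral.integral_interval_sub_left (hII 0 v) (hII 0 u)]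
  have hGmono : Monotone G := by
    intro u v huv
    have h1 : (0:ℝ) ≤ ∫ s in u..v, φ s := intervalIntegral.integral_nonneg huv fun s _ => h0 s
    have := hsub u v; linarith
  have hGcont : Continuous G := intervalIntegral.continuous_primitive hII 0
  have hG0 : G 0 = 0 := intervalIntegral.integral_same
  have hGnn : ∀ s, 0 ≤ G s := by
    intro s
    rcases le_total 0 s with hs | hs
    · rw [← hG0]; exact hGmono hs
    · have : G s - G 0 = ∫ u in (0:ℝ)..s, φ u := hsub 0 s
      rw [hG0, sub_zero] at this
      rw [this, intervalIntegral.integral_symm]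
      have hz : ∫ u in s..(0:ℝ), φ u = 0 := by
        rw [intervalIntegral.integral_of_le hs]
        apply MeasureTheory.setIntegral_eq_zero_of_forall_eq_zero
        intro u hu
        exact hsupp u hu.2
      rw [hz, neg_zero]
  have hhmono : MonotoneOn h (Set.Ici 0) := by
    apply monotoneOn_of_deriv_nonneg (convex_Ici 0)
    · exact fun y _ => (hh y).differentiableAt.continuousAt.continuousWithinAt
    · exact fun y _ => (hh y).differentiableAt.differentiableWithinAt
    · intro y hy
      rw [(hh y).deriv]
      exact hψ0 y (le_of_lt (by simpa using hy))
  have hHmono : Monotone (fun s => h (G s)) :=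
    fun u v huv => hhmono (hGnn u) (hGnn v) (hGmono huv)
  have hHcont : Continuous (fun s => h (G s)) := by
    have : Continuous h := by
      apply continuous_iff_continuousAt.2
      exact fun y => (hh y).differentiableAt.continuousAt
    exact this.comp hGcont
  have hGder := NFT_ae_hasDerivAt_primitive hm h0 hi
  have hHder : ∀ᵐ s, HasDerivAt (fun u => h (G u)) (ψ (G s) * φ s) s := by
    filter_upwards [hGder] with s hs using (hh (G s)).comp s hs
  have hae := hHmono.ae_hasDerivAt
  have huniq : ∀ᵐ s, ψ (G s) * φ s
      = (Measure.rnDeriv hHmono.stieltjesFunction.measure volume s).toReal := by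
    filter_upwards [hae, hHder] with s h1 h2 using h2.unique h1
  have hμIoc : hHmono.stieltjesFunction.measure (Set.Ioc 0 t)
      = ENNReal.ofReal (h (G t) - h (G 0)) := by
    rw [StieltjesFunction.measure_Ioc, NFT_aux_monotone_stieltjes_eq hHmono hHcont,
      NFT_aux_monotone_stieltjes_eq hHmono hHcont]
  have hmeas : AEStronglyMeasurable (fun s => φ s * ψ (G s))
      (volume.restrict (Set.Ioc 0 t)) :=
    ((hm.mul ((hψc.comp hGcont).measurable)).aestronglyMeasurable).restrict
  rw [intervalIntegral.integral_of_le ht]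
  rw [MeasureTheory.integral_eq_lintegral_of_nonneg_ae
    (Filter.Eventually.of_forall fun s => mul_nonneg (h0 s) (hψ0 _ (hGnn s))) hmeas]
  have hle : (∫⁻ s in Set.Ioc 0 t, ENNReal.ofReal (φ s * ψ (G s)))
      ≤ ENNReal.ofReal (h (G t) - h (G 0)) := by
    have e1 : (∫⁻ s in Set.Ioc 0 t, ENNReal.ofReal (φ s * ψ (G s)))
        = ∫⁻ s in Set.Ioc 0 t,
            ENNReal.ofReal ((Measure.rnDeriv hHmono.stieltjesFunction.measure volume s).toReal) := by
      apply lintegral_congr_ae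
      apply ae_restrict_of_ae
      filter_upwards [huniq] with s hs
      rw [mul_comm] at hs
      rw [hs]
    rw [e1, ← hμIoc]
    refine le_trans (lintegral_mono fun s => ENNReal.ofReal_toReal_le) ?_
    exact Measure.setLIntegral_rnDeriv_le _
  have hfin : h (G 0) ≤ h (G t) := hhmono (hGnn 0) (hGnn t) (hGmono ht)
  calc (∫⁻ s in Set.Ioc 0 t, ENNReal.ofReal (φ s * ψ (G s))).toReal
      ≤ (ENNReal.ofReal (h (G t) - h (G 0))).toReal :=
        ENNReal.toReal_mono ENNReal.ofReal_ne_top hle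
    _ = h (G t) - h (G 0) := ENNReal.toReal_ofReal (by linarith)
    _ = h (∫ (v : ℝ) in (0:ℝ)..t, φ v) - h 0 := by rw [hG0]

lemma NFT_hasDerivAt_pow_div_factorial (m : ℕ) (y : ℝ) :
    HasDerivAt (fun z : ℝ => z ^ (m + 1) / (m + 1).factorial) (y ^ m / m.factorial) y := by
  have h := (hasDerivAt_pow (m + 1) y).div_const ((m + 1).factorial : ℝ)
  refine h.congr_deriv ?_
  rw [Nat.add_sub_cancel, Nat.factorial_succ]
  have hm : (m.factorial : ℝ) ≠ 0 := Nat.cast_ne_zero.2 m.factorial_ne_zero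
  push_cast
  field_simp

lemma NFT_six_two_pow_le (n : ℕ) : 6 * 2 ^ n ≤ (2 * n + 3).factorial := by
  induction n with
  | zero => simp [Nat.factorial]
  | succ n ih =>
    have h1 : 2 * (n + 1) + 3 = (2 * n + 3) + 2 := by ring
    rw [h1]
    have h2 : ((2 * n + 3) + 2).factorial = ((2 * n + 3) + 2) * (((2 * n + 3) + 1) * (2 * n + 3).factorial) := by
      rw [Nat.factorial_succ, Nat.factorial_succ]
    rw [h2]
    have h3 : 6 * 2 ^ (n + 1) = 2 * (6 * 2 ^ n) := by ring
    rw [h3]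
    calc 2 * (6 * 2 ^ n) ≤ 2 * (2 * n + 3).factorial := by
          exact Nat.mul_le_mul_left 2 ih
      _ ≤ ((2 * n + 3) + 2) * (((2 * n + 3) + 1) * (2 * n + 3).factorial) := by
          have : 1 * (2 * n + 3).factorial ≤ ((2 * n + 3) + 1) * (2 * n + 3).factorial :=
            Nat.mul_le_mul_right _ (by omega)
          calc 2 * (2 * n + 3).factorial
              ≤ ((2 * n + 3) + 2) * (2 * n + 3).factorial := Nat.mul_le_mul_right _ (by omega)
            _ ≤ ((2 * n + 3) + 2) * (((2 * n + 3) + 1) * (2 * n + 3).factorial) := by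
                apply Nat.mul_le_mul_left
                omega

lemma NFT_hasSum_sinh_tail (y : ℝ) :
    HasSum (fun k : ℕ => y ^ (2 * k + 3) / (2 * k + 3).factorial) (Real.sinh y - y) := by
  have hs := Real.hasSum_sinh y
  have h' := (hasSum_nat_add_iff' (f := fun m : ℕ => y ^ (2 * m + 1) / (2 * m + 1).factorial) 1).2 hs
  simp only [Finset.range_one, Finset.sum_singleton] at h'
  have e0 : y ^ (2 * 0 + 1) / ((2 * 0 + 1).factorial : ℝ) = y := by norm_num
  rw [e0] at h'
  have he : (fun n : ℕ => y ^ (2 * (n + 1) + 1) / ((2 * (n + 1) + 1).factorial : ℝ))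
      = fun k : ℕ => y ^ (2 * k + 3) / ((2 * k + 3).factorial : ℝ) := by
    funext k
    rw [show 2 * (k + 1) + 1 = 2 * k + 3 by ring]
  rwa [he] at h'

lemma NFT_sum_tail_le (y : ℝ) (hy : 0 ≤ y) (n : ℕ) :
    ∑ k ∈ Finset.range n, y ^ (2 * k + 3) / (2 * k + 3).factorial ≤ Real.sinh y - y :=
  sum_le_hasSum (Finset.range n) (fun i _ => by positivity) (NFT_hasSum_sinh_tail y)

lemma NFT_sinh_sub_le_cube {y : ℝ} (h0 : 0 ≤ y) (h1 : y ≤ 1) : Real.sinh y - y ≤ y ^ 3 := by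
  have hcomp : HasSum (fun k : ℕ => y ^ 3 * ((1 / 6 : ℝ) * (1 / 2) ^ k)) (y ^ 3 * ((1 / 6) * 2)) := by
    exact (hasSum_geometric_two.mul_left (1/6)).mul_left (y ^ 3)
  have hle := hasSum_le (f := fun k : ℕ => y ^ (2 * k + 3) / (2 * k + 3).factorial)
    (g := fun k : ℕ => y ^ 3 * ((1 / 6 : ℝ) * (1 / 2) ^ k)) ?_ (NFT_hasSum_sinh_tail y) hcomp
  · nlinarith [pow_nonneg h0 3]
  · intro k
    have hpow : y ^ (2 * k + 3) ≤ y ^ 3 := pow_le_pow_of_le_one h0 h1 (by omega)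
    have hfac : (6 * 2 ^ k : ℝ) ≤ ((2 * k + 3).factorial : ℝ) := by
      exact_mod_cast NFT_six_two_pow_le k
    have h2 : y ^ (2 * k + 3) / ((2 * k + 3).factorial : ℝ) ≤ y ^ 3 / (6 * 2 ^ k) := by
      apply div_le_div₀ (by positivity) hpow (by positivity) hfac
    refine h2.trans (le_of_eq ?_)
    show y ^ 3 / (6 * 2 ^ k) = y ^ 3 * (1 / 6 * (1 / 2) ^ k)
    rw [div_pow, one_pow]
    field_simp

lemma NFT_hasDerivAt_pow_div_factorial' (m p : ℕ) (hp : p = m + 1) (y : ℝ) :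
    HasDerivAt (fun z : ℝ => z ^ p / p.factorial) (y ^ m / m.factorial) y := by
  subst hp; exact NFT_hasDerivAt_pow_div_factorial m y

noncomputable def NFTpsi (C : ℝ) (j : ℕ) (n : ℕ) (y : ℝ) : ℝ :=
  (∑ k ∈ Finset.range n, y ^ (2 * k + j) / (2 * k + j).factorial)
    + C * (y ^ (2 * n + j) / (2 * n + j).factorial)

lemma NFTpsi_hasDerivAt (C : ℝ) (j n : ℕ) (y : ℝ) :
    HasDerivAt (NFTpsi C (j + 1) n) (NFTpsi C j n y) y := by
  unfold NFTpsi
  apply HasDerivAt.add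
  · exact HasDerivAt.fun_sum fun k _ =>
      NFT_hasDerivAt_pow_div_factorial' (2 * k + j) (2 * k + (j + 1)) (by omega) y
  · exact (NFT_hasDerivAt_pow_div_factorial' (2 * n + j) (2 * n + (j + 1)) (by omega) y).const_mul C

lemma NFTpsi_nonneg {C : ℝ} (hC : 0 ≤ C) (j n : ℕ) {y : ℝ} (hy : 0 ≤ y) :
    0 ≤ NFTpsi C j n y :=
  add_nonneg (Finset.sum_nonneg fun k _ => div_nonneg (pow_nonneg hy _) (Nat.cast_nonneg _))
    (mul_nonneg hC (div_nonneg (pow_nonneg hy _) (Nat.cast_nonneg _)))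

lemma NFTpsi_continuous (C : ℝ) (j n : ℕ) : Continuous (NFTpsi C j n) := by
  unfold NFTpsi
  exact (continuous_finset_sum _ fun k _ => (continuous_pow _).div_const _).add
    (continuous_const.mul ((continuous_pow _).div_const _))

lemma NFTpsi_zero_eq (C : ℝ) (j n : ℕ) (hj : 0 < j) : NFTpsi C j n 0 = 0 := by
  unfold NFTpsi
  rw [Finset.sum_eq_zero fun k _ => by rw [zero_pow (by omega : 2 * k + j ≠ 0), zero_div]]
  rw [zero_pow (by omega : 2 * n + j ≠ 0), zero_div, mul_zero, add_zero]

lemma NFTpsi_zero_n (C : ℝ) (y : ℝ) : NFTpsi C 0 0 y = C := by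
  unfold NFTpsi; simp

lemma NFTpsi_succ (C : ℝ) (n : ℕ) (y : ℝ) : NFTpsi C 0 (n + 1) y = 1 + NFTpsi C 2 n y := by
  unfold NFTpsi
  rw [Finset.sum_range_succ']
  rw [Finset.sum_congr rfl (fun k _ => by
    rw [show 2 * (k + 1) + 0 = 2 * k + 2 from by omega] :
      ∀ k ∈ Finset.range n, y ^ (2 * (k + 1) + 0) / ((2 * (k + 1) + 0).factorial : ℝ)
        = y ^ (2 * k + 2) / ((2 * k + 2).factorial : ℝ))]
  rw [show 2 * (n + 1) + 0 = 2 * n + 2 from by omega]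
  norm_num
  ring

lemma NFTpsi_three_le {C : ℝ} (hC : 0 ≤ C) {y : ℝ} (hy : 0 ≤ y) (n : ℕ) :
    NFTpsi C 3 n y ≤ (Real.sinh y - y) + C * (y ^ (2 * n + 3) / (2 * n + 3).factorial) := by
  unfold NFTpsi
  have := NFT_sum_tail_le y hy n
  linarith

/-- linearization of the nonlinear Fourier transform: `b` agrees with
the (conjugate-modulated) partial Fourier integral of `f` to third order. -/
theorem b_is_fourier_transform_to_third_order
    (x : ℝ) (f a b : ℝ → ℂ)
    (hf : LocallyIntegrableOn f (Set.Ici 0))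
    (ha : ∀ t : ℝ, 0 ≤ t → HasDerivAt a
      (Complex.exp (2 * Complex.I * (x : ℂ) * (t : ℂ)) *
        (starRingEnd ℂ) (f t) * (starRingEnd ℂ) (b t)) t)
    (hb : ∀ t : ℝ, 0 ≤ t → HasDerivAt b
      (Complex.exp (2 * Complex.I * (x : ℂ) * (t : ℂ)) *
        (starRingEnd ℂ) (f t) * (starRingEnd ℂ) (a t)) t)
    (ha0 : a 0 = 1) (hb0 : b 0 = 0) :
    ∀ t : ℝ, 0 ≤ t →
      Norm.norm (b t - ∫ s in (0:ℝ)..t,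
          Complex.exp (2 * Complex.I * (x : ℂ) * (s : ℂ)) * (starRingEnd ℂ) (f s)) ≤
        Real.sinh (∫ s in (0:ℝ)..t, Norm.norm (f s)) -
          (∫ s in (0:ℝ)..t, Norm.norm (f s)) ∧
      ((∫ s in (0:ℝ)..t, Norm.norm (f s)) ≤ 1 →
        Norm.norm (b t - ∫ s in (0:ℝ)..t,
            Complex.exp (2 * Complex.I * (x : ℂ) * (s : ℂ)) * (starRingEnd ℂ) (f s)) ≤
          (∫ s in (0:ℝ)..t, Norm.norm (f s)) ^ 3) := by
  intro t ht
  have henorm : ∀ u : ℝ, ‖Complex.exp (2 * Complex.I * (x : ℂ) * (u : ℂ))‖ = 1 := by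
    intro u
    have h1 : 2 * Complex.I * (x : ℂ) * (u : ℂ) = ((2 * x * u : ℝ) : ℂ) * Complex.I := by
      push_cast; ring
    rw [h1, Complex.norm_exp_ofReal_mul_I]
  -- integrability of f on Icc 0 t
  have hfi : IntegrableOn f (Set.Icc 0 t) volume :=
    hf.integrableOn_compact_subset (fun u hu => hu.1) isCompact_Icc
  -- measurable representative
  obtain ⟨g, hgsm, hfg⟩ : ∃ g : ℝ → ℂ, StronglyMeasurable g ∧
      ∀ᵐ u ∂(volume.restrict (Set.Icc 0 t)), f u = g u :=
    ⟨hfi.aestronglyMeasurable.mk f, hfi.aestronglyMeasurable.stronglyMeasurable_mk,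
      hfi.aestronglyMeasurable.ae_eq_mk⟩
  have hfg' : ∀ᵐ u ∂volume, u ∈ Set.Icc 0 t → f u = g u :=
    (ae_restrict_iff' measurableSet_Icc).1 hfg
  set φ : ℝ → ℝ := Set.indicator (Set.Ioc 0 t) (fun u => ‖g u‖) with hφdef
  have hm : Measurable φ := (hgsm.measurable.norm).indicator measurableSet_Ioc
  have h0 : ∀ s, 0 ≤ φ s := fun s =>
    Set.indicator_nonneg (fun u _ => norm_nonneg _) s
  have hsupp : ∀ s, s ≤ 0 → φ s = 0 := fun s hs =>
    Set.indicator_of_notMem (fun hmem => absurd hmem.1 (not_lt.2 hs)) _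
  have hi : Integrable φ := by
    rw [hφdef, integrable_indicator_iff measurableSet_Ioc]
    have h1 : IntegrableOn f (Set.Ioc 0 t) volume := hfi.mono_set Set.Ioc_subset_Icc_self
    have h2 : IntegrableOn g (Set.Ioc 0 t) volume :=
      h1.congr (ae_restrict_of_ae_restrict_of_subset Set.Ioc_subset_Icc_self hfg)
    exact h2.norm
  set G : ℝ → ℝ := fun u => ∫ v in (0:ℝ)..u, φ v with hGdef
  have hGcont : Continuous G :=
    intervalIntegral.continuous_primitive (fun a b => hi.intervalIntegrable) 0
  have hGtnn : 0 ≤ G t := intervalIntegral.integral_nonneg ht fun u _ => h0 u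
  -- a.e. equality of ‖f‖ and φ
  have hae_fφ : ∀ s ∈ Set.Icc (0:ℝ) t, (∀ᵐ u ∂volume, u ∈ Set.Ioc 0 s → ‖f u‖ = φ u) := by
    intro s hs
    filter_upwards [hfg'] with u hu hu'
    have hmem : u ∈ Set.Ioc 0 t := ⟨hu'.1, hu'.2.trans hs.2⟩
    rw [hφdef, Set.indicator_of_mem hmem, hu ⟨hmem.1.le, hmem.2⟩]
  have hF : (∫ s in (0:ℝ)..t, Norm.norm (f s)) = G t := by
    rw [hGdef]
    apply intervalIntegral.integral_congr_ae
    filter_upwards [hae_fφ t ⟨ht, le_rfl⟩] with u hu hu'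
    rw [Set.uIoc_of_le ht] at hu'
    exact hu hu'
  -- continuity of a, b
  have hacont : ContinuousOn a (Set.Icc 0 t) :=
    fun s hs => ((ha s hs.1).continuousAt).continuousWithinAt
  have hbcont : ContinuousOn b (Set.Icc 0 t) :=
    fun s hs => ((hb s hs.1).continuousAt).continuousWithinAt
  -- crude bound
  obtain ⟨Ca, hCa⟩ := isCompact_Icc.exists_bound_of_continuousOn hacont
  set C : ℝ := max (max Ca 0) 1 with hCdef
  have hC1 : (1:ℝ) ≤ C := le_max_right _ 1
  have hC0 : (0:ℝ) ≤ C := zero_le_one.trans hC1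
  have hCa' : ∀ s ∈ Set.Icc (0:ℝ) t, ‖a s‖ ≤ C := fun s hs =>
    (hCa s hs).trans ((le_max_left Ca 0).trans (le_max_left _ 1))
  -- integrability of conj f
  have hconjf : ∀ s ∈ Set.Icc (0:ℝ) t,
      IntervalIntegrable (fun u => (starRingEnd ℂ) (f u)) volume 0 s := by
    intro s hs
    rw [intervalIntegrable_iff, Set.uIoc_of_le hs.1]
    have h1 : IntegrableOn f (Set.Ioc 0 s) volume :=
      hfi.mono_set (fun u hu => ⟨hu.1.le, hu.2.trans hs.2⟩)
    refine h1.norm.mono'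
      (Complex.continuous_conj.comp_aestronglyMeasurable h1.aestronglyMeasurable) ?_
    exact Filter.Eventually.of_forall fun u => by simp
  -- integrability of full integrands
  have hEint : ∀ (w : ℝ → ℂ), ContinuousOn w (Set.Icc 0 t) → ∀ s ∈ Set.Icc (0:ℝ) t,
      IntervalIntegrable (fun u => Complex.exp (2 * Complex.I * (x : ℂ) * (u : ℂ)) *
        (starRingEnd ℂ) (f u) * (starRingEnd ℂ) (w u)) volume 0 s := by
    intro w hwcont s hs
    have hsub1 : Set.Icc (0:ℝ) s ⊆ Set.Icc 0 t := Set.Icc_subset_Icc le_rfl hs.2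
    have hcont2 : ContinuousOn (fun u : ℝ =>
        Complex.exp (2 * Complex.I * (x : ℂ) * (u : ℂ)) * (starRingEnd ℂ) (w u))
        (Set.uIcc (0:ℝ) s) := by
      rw [Set.uIcc_of_le hs.1]
      exact ((Complex.continuous_exp.comp
        ((continuous_const.mul Complex.continuous_ofReal))).continuousOn).mul
        (Complex.continuous_conj.comp_continuousOn (hwcont.mono hsub1))
    have h1 := (hconjf s hs).mul_continuousOn hcont2
    have h2 : (fun u : ℝ => (starRingEnd ℂ) (f u) *
        (Complex.exp (2 * Complex.I * (x : ℂ) * (u : ℂ)) * (starRingEnd ℂ) (w u)))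
        = fun u : ℝ => Complex.exp (2 * Complex.I * (x : ℂ) * (u : ℂ)) *
          (starRingEnd ℂ) (f u) * (starRingEnd ℂ) (w u) := by
      funext u; ring
    rwa [h2] at h1
  -- the core estimate
  have core : ∀ (w : ℝ → ℂ), ContinuousOn w (Set.Icc 0 t) →
      ∀ (σ ρ : ℝ → ℝ), Continuous σ → (∀ y, 0 ≤ y → 0 ≤ σ y) → (∀ y, HasDerivAt ρ (σ y) y) →
      (∀ u ∈ Set.Icc (0:ℝ) t, ‖w u‖ ≤ σ (G u)) →
      ∀ s ∈ Set.Icc (0:ℝ) t,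
        ‖∫ u in (0:ℝ)..s, Complex.exp (2 * Complex.I * (x : ℂ) * (u : ℂ)) *
            (starRingEnd ℂ) (f u) * (starRingEnd ℂ) (w u)‖ ≤ ρ (G s) - ρ 0 := by
    intro w hwcont σ ρ hσc hσ0 hρ hwle s hs
    have hsub1 : Set.Icc (0:ℝ) s ⊆ Set.Icc 0 t := Set.Icc_subset_Icc le_rfl hs.2
    refine (intervalIntegral.norm_integral_le_integral_norm hs.1).trans ?_
    have h3 : (∫ u in (0:ℝ)..s, ‖Complex.exp (2 * Complex.I * (x : ℂ) * (u : ℂ)) *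
        (starRingEnd ℂ) (f u) * (starRingEnd ℂ) (w u)‖)
        = ∫ u in (0:ℝ)..s, φ u * ‖w u‖ := by
      apply intervalIntegral.integral_congr_ae
      filter_upwards [hae_fφ s hs] with u hu hu'
      rw [Set.uIoc_of_le hs.1] at hu'
      rw [norm_mul, norm_mul, henorm u, one_mul, RCLike.norm_conj, RCLike.norm_conj, hu hu']
    rw [h3]
    have hint1 : IntervalIntegrable (fun u => φ u * ‖w u‖) volume 0 s :=
      hi.intervalIntegrable.mul_continuousOn (by
        rw [Set.uIcc_of_le hs.1]; exact (hwcont.mono hsub1).norm)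
    have hint2 : IntervalIntegrable (fun u => φ u * σ (G u)) volume 0 s :=
      hi.intervalIntegrable.mul_continuousOn ((hσc.comp hGcont).continuousOn)
    have h4 : (∫ u in (0:ℝ)..s, φ u * ‖w u‖) ≤ ∫ u in (0:ℝ)..s, φ u * σ (G u) := by
      apply intervalIntegral.integral_mono_on hs.1 hint1 hint2
      intro u hu
      exact mul_le_mul_of_nonneg_left (hwle u (hsub1 hu)) (h0 u)
    exact h4.trans (NFT_key_integral_le hm h0 hsupp hi hσc hσ0 hρ hs.1)
  -- FTC representations
  have hbrep : ∀ s ∈ Set.Icc (0:ℝ) t, b s = ∫ u in (0:ℝ)..s,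
      Complex.exp (2 * Complex.I * (x : ℂ) * (u : ℂ)) *
        (starRingEnd ℂ) (f u) * (starRingEnd ℂ) (a u) := by
    intro s hs
    have hder : ∀ u ∈ Set.uIcc (0:ℝ) s, HasDerivAt b
        (Complex.exp (2 * Complex.I * (x : ℂ) * (u : ℂ)) *
          (starRingEnd ℂ) (f u) * (starRingEnd ℂ) (a u)) u := by
      intro u hu; rw [Set.uIcc_of_le hs.1] at hu; exact hb u hu.1
    have h1 := intervalIntegral.integral_eq_sub_of_hasDerivAt hder (hEint a hacont s hs)
    rw [hb0, sub_zero] at h1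
    exact h1.symm
  have harep : ∀ s ∈ Set.Icc (0:ℝ) t, a s - 1 = ∫ u in (0:ℝ)..s,
      Complex.exp (2 * Complex.I * (x : ℂ) * (u : ℂ)) *
        (starRingEnd ℂ) (f u) * (starRingEnd ℂ) (b u) := by
    intro s hs
    have hder : ∀ u ∈ Set.uIcc (0:ℝ) s, HasDerivAt a
        (Complex.exp (2 * Complex.I * (x : ℂ) * (u : ℂ)) *
          (starRingEnd ℂ) (f u) * (starRingEnd ℂ) (b u)) u := by
      intro u hu; rw [Set.uIcc_of_le hs.1] at hu; exact ha u hu.1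
    have h1 := intervalIntegral.integral_eq_sub_of_hasDerivAt hder (hEint b hbcont s hs)
    rw [ha0] at h1
    exact h1.symm
  -- inductive steps
  have stepB : ∀ n : ℕ, (∀ u ∈ Set.Icc (0:ℝ) t, ‖a u‖ ≤ NFTpsi C 0 n (G u)) →
      ∀ s ∈ Set.Icc (0:ℝ) t, ‖b s‖ ≤ NFTpsi C 1 n (G s) := by
    intro n hn s hs
    have hc := core a hacont (NFTpsi C 0 n) (NFTpsi C 1 n) (NFTpsi_continuous C 0 n)
      (fun y hy => NFTpsi_nonneg hC0 0 n hy) (NFTpsi_hasDerivAt C 0 n) hn s hs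
    rw [← hbrep s hs] at hc
    have hz := NFTpsi_zero_eq C 1 n one_pos
    linarith
  have stepA : ∀ n : ℕ, (∀ u ∈ Set.Icc (0:ℝ) t, ‖b u‖ ≤ NFTpsi C 1 n (G u)) →
      ∀ s ∈ Set.Icc (0:ℝ) t, ‖a s - 1‖ ≤ NFTpsi C 2 n (G s) := by
    intro n hn s hs
    have hc := core b hbcont (NFTpsi C 1 n) (NFTpsi C 2 n) (NFTpsi_continuous C 1 n)
      (fun y hy => NFTpsi_nonneg hC0 1 n hy) (NFTpsi_hasDerivAt C 1 n) hn s hs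
    rw [← harep s hs] at hc
    have hz := NFTpsi_zero_eq C 2 n two_pos
    linarith
  have IH : ∀ n : ℕ, ∀ s ∈ Set.Icc (0:ℝ) t, ‖a s‖ ≤ NFTpsi C 0 n (G s) := by
    intro n
    induction n with
    | zero =>
      intro s hs
      rw [NFTpsi_zero_n]
      exact hCa' s hs
    | succ n ih =>
      intro s hs
      have h2 := stepA n (stepB n ih) s hs
      have h1 : ‖a s‖ ≤ 1 + ‖a s - 1‖ := by
        calc ‖a s‖ = ‖1 + (a s - 1)‖ := by ring_nf
          _ ≤ ‖(1:ℂ)‖ + ‖a s - 1‖ := norm_add_le _ _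
          _ = 1 + ‖a s - 1‖ := by rw [norm_one]
      rw [NFTpsi_succ]
      linarith
  have habn : ∀ n : ℕ, ∀ s ∈ Set.Icc (0:ℝ) t, ‖a s - 1‖ ≤ NFTpsi C 2 n (G s) :=
    fun n => stepA n (stepB n (IH n))
  -- representation of the difference
  have hdiffrep : b t - (∫ s in (0:ℝ)..t,
      Complex.exp (2 * Complex.I * (x : ℂ) * (s : ℂ)) * (starRingEnd ℂ) (f s))
      = ∫ u in (0:ℝ)..t, Complex.exp (2 * Complex.I * (x : ℂ) * (u : ℂ)) *
          (starRingEnd ℂ) (f u) * (starRingEnd ℂ) (a u - 1) := by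
    rw [hbrep t ⟨ht, le_rfl⟩]
    have hint2 : IntervalIntegrable (fun u : ℝ =>
        Complex.exp (2 * Complex.I * (x : ℂ) * (u : ℂ)) * (starRingEnd ℂ) (f u)) volume 0 t :=
      (hconjf t ⟨ht, le_rfl⟩).continuousOn_mul
        ((Complex.continuous_exp.comp
          ((continuous_const.mul Complex.continuous_ofReal))).continuousOn)
    rw [← intervalIntegral.integral_sub (hEint a hacont t ⟨ht, le_rfl⟩) hint2]
    apply intervalIntegral.integral_congr
    intro u _
    dsimp only
    have h1 : (starRingEnd ℂ) (a u - 1) = (starRingEnd ℂ) (a u) - 1 := by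
      rw [map_sub, map_one]
    rw [h1]; ring
  have hwm1 : ContinuousOn (fun u => a u - 1) (Set.Icc 0 t) := hacont.sub continuousOn_const
  have hfinal : ∀ n : ℕ, ‖b t - (∫ s in (0:ℝ)..t,
      Complex.exp (2 * Complex.I * (x : ℂ) * (s : ℂ)) * (starRingEnd ℂ) (f s))‖
      ≤ (Real.sinh (G t) - G t) + C * ((G t) ^ (2 * n + 3) / (2 * n + 3).factorial) := by
    intro n
    rw [hdiffrep]
    have hc := core (fun u => a u - 1) hwm1 (NFTpsi C 2 n) (NFTpsi C 3 n)
      (NFTpsi_continuous C 2 n) (fun y hy => NFTpsi_nonneg hC0 2 n hy)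
      (NFTpsi_hasDerivAt C 2 n) (habn n) t ⟨ht, le_rfl⟩
    have hz := NFTpsi_zero_eq C 3 n three_pos
    have h5 := NFTpsi_three_le hC0 hGtnn n
    linarith
  have htend : Filter.Tendsto (fun n : ℕ => (Real.sinh (G t) - G t)
      + C * ((G t) ^ (2 * n + 3) / ((2 * n + 3).factorial : ℝ))) Filter.atTop
      (nhds ((Real.sinh (G t) - G t) + C * 0)) := by
    apply Filter.Tendsto.const_add
    apply Filter.Tendsto.const_mul
    have h1 := FloorSemiring.tendsto_pow_div_factorial_atTop (K := ℝ) (G t)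
    have h2 : Filter.Tendsto (fun n : ℕ => 2 * n + 3) Filter.atTop Filter.atTop :=
      Filter.tendsto_atTop.2 fun c => Filter.eventually_atTop.2 ⟨c, fun n hn => by omega⟩
    exact h1.comp h2
  have hle1 : ‖b t - (∫ s in (0:ℝ)..t,
      Complex.exp (2 * Complex.I * (x : ℂ) * (s : ℂ)) * (starRingEnd ℂ) (f s))‖
      ≤ Real.sinh (G t) - G t := by
    have h1 := ge_of_tendsto' htend hfinal
    rwa [mul_zero, add_zero] at h1
  rw [hF]
  constructor
  · exact hle1
  · intro h1
    exact hle1.trans (NFT_sinh_sub_le_cube hGtnn h1)
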